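/- Let f : X → X be a function on a 2-normed space X. If for some fixed x₀ ∈ X it holds that for every sequence (xₙ) statistically converging to x₀ the sequence (f(xₙ)) converges to f(x₀) (in the ordinary sense), then f is constant. -/

import Mathlib

open Filter

/-- A 2-normed space: a real linear space with dim > 1 together with a 2-norm. -/
structure TwoNormedSpace (X : Type*) [AddCommGroup X] [Module ℝ X] : Type _ where
  toFun : X → X → ℝ
  one_lt_rank : 1 < Module.rank ℝ X
  eq_zero_iff : ∀ x y : X, toFun x y = 0 ↔ ¬ LinearIndependent ℝ ![x, y]
  symm : ∀ x y : X, toFun x y = toFun y x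
  smul_left : ∀ (α : ℝ) (x y : X), toFun (α • x) y = |α| * toFun x y
  add_right : ∀ x y z : X, toFun x (y + z) ≤ toFun x y + toFun x z

variable {X : Type*} [AddCommGroup X] [Module ℝ X]

/-- A sequence is statistically quasi-Cauchy w.r.t. a 2-norm `N`. -/
def StatQuasiCauchy (N : X → X → ℝ) (x : ℕ → X) : Prop :=
  ∀ ε > (0:ℝ), ∀ z : X, Tendsto
    (fun n => (((Finset.range n).filter (fun k => ε ≤ N (x (k+1) - x k) z)).card : ℝ) / n)
    atTop (nhds 0)

/-- A sequence statistically converges to `L` w.r.t. a 2-norm `N`. -/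
def StatConv (N : X → X → ℝ) (x : ℕ → X) (L : X) : Prop :=
  ∀ ε > (0:ℝ), ∀ z : X, Tendsto
    (fun n => (((Finset.range n).filter (fun k => ε ≤ N (x k - L) z)).card : ℝ) / n)
    atTop (nhds 0)

/-- A sequence converges to `L` w.r.t. a 2-norm `N`. -/
def ConvTo (N : X → X → ℝ) (x : ℕ → X) (L : X) : Prop :=
  ∀ z : X, Tendsto (fun n => N (x n - L) z) atTop (nhds 0)

/-- A sequence is quasi-Cauchy w.r.t. a 2-norm `N`. -/
def QuasiCauchy (N : X → X → ℝ) (x : ℕ → X) : Prop :=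
  ∀ z : X, Tendsto (fun n => N (x (n+1) - x n) z) atTop (nhds 0)

/-- A subset `E` is statistically ward compact w.r.t. a 2-norm `N`. -/
def StatWardCompact (N : X → X → ℝ) (E : Set X) : Prop :=
  ∀ x : ℕ → X, (∀ n, x n ∈ E) → ∃ φ : ℕ → ℕ, StrictMono φ ∧ StatQuasiCauchy N (x ∘ φ)

/-- `f` is statistically ward continuous on `E` w.r.t. a 2-norm `N`. -/
def StatWardContinuousOn (N : X → X → ℝ) (f : X → X) (E : Set X) : Prop :=
  ∀ x : ℕ → X, (∀ n, x n ∈ E) → StatQuasiCauchy N x → StatQuasiCauchy N (fun n => f (x n))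

/-- The standard 2-norm on `ℝ²`: the area of the parallelogram spanned by `a` and `b`. -/
def N2 : ℝ × ℝ → ℝ × ℝ → ℝ := fun a b => |a.1 * b.2 - a.2 * b.1|

theorem stmt12 {X : Type*} [AddCommGroup X] [Module ℝ X] (T : TwoNormedSpace X)
    (f : X → X) (x₀ : X)
    (h : ∀ x : ℕ → X, StatConv T.toFun x x₀ → ConvTo T.toFun (fun n => f (x n)) (f x₀)) :
    ∀ t : X, f t = f x₀ := by
  intro t
  set x : ℕ → X := fun n => if Nat.sqrt n * Nat.sqrt n = n then t else x₀ with hxdef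
  have hzero : ∀ z : X, T.toFun 0 z = 0 := by
    intro z
    have := T.smul_left 0 0 z
    simpa using this
  -- auxiliary bound tendsto
  have hsqrt_tendsto : Tendsto (fun n : ℕ => (Nat.sqrt n + 1 : ℝ) / n) atTop (nhds 0) := by
    have hs : Tendsto (fun n : ℕ => Real.sqrt n) atTop atTop := by
      rw [tendsto_atTop_atTop]
      intro b
      refine ⟨Nat.ceil (b^2), fun n hn => ?_⟩
      have hb2 : (b^2 : ℝ) ≤ n := le_trans (Nat.le_ceil _) (by exact_mod_cast hn)
      calc b ≤ |b| := le_abs_self b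
        _ = Real.sqrt (b^2) := (Real.sqrt_sq_eq_abs b).symm
        _ ≤ Real.sqrt n := Real.sqrt_le_sqrt hb2
    have h2 : Tendsto (fun n : ℕ => 2 / Real.sqrt n) atTop (nhds 0) :=
      Tendsto.div_atTop tendsto_const_nhds hs
    apply tendsto_of_tendsto_of_tendsto_of_le_of_le' tendsto_const_nhds h2
    · filter_upwards with n
      positivity
    · filter_upwards [Filter.eventually_ge_atTop 1] with n hn
      have h1 : 1 ≤ Nat.sqrt n := by
        have := Nat.sqrt_le_sqrt hn
        simpa using this
      have hle : (Nat.sqrt n : ℝ) ≤ Real.sqrt n := by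
        rw [show (Nat.sqrt n : ℝ) = Real.sqrt ((Nat.sqrt n : ℝ)^2) by
          rw [Real.sqrt_sq (by positivity)]]
        apply Real.sqrt_le_sqrt
        have := Nat.sqrt_le n
        rw [pow_two]
        exact_mod_cast this
      have hnpos : (0:ℝ) < n := by exact_mod_cast hn
      have hsq : Real.sqrt n * Real.sqrt n = (n:ℝ) := Real.mul_self_sqrt (by positivity)
      have hs_pos : (0:ℝ) < Real.sqrt n := by
        rw [Real.sqrt_pos]; exact hnpos
      calc (Nat.sqrt n + 1 : ℝ) / n ≤ (2 * Real.sqrt n) / n := by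
            apply div_le_div_of_nonneg_right _ hnpos.le
            have h1' : (1:ℝ) ≤ Nat.sqrt n := by exact_mod_cast h1
            nlinarith
        _ = 2 / Real.sqrt n := by
            rw [← hsq]; field_simp; rw [Real.sqrt_sq hs_pos.le]
  have hstat : StatConv T.toFun x x₀ := by
    intro ε hε z
    apply squeeze_zero (fun n => by positivity) _ hsqrt_tendsto
    intro n
    apply div_le_div_of_nonneg_right _ _
    · -- card bound
      have hsub : (Finset.range n).filter (fun k => ε ≤ T.toFun (x k - x₀) z) ⊆
          (Finset.range n).filter (fun k => Nat.sqrt k * Nat.sqrt k = k) := by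
        intro k hk
        simp only [Finset.mem_filter] at hk ⊢
        refine ⟨hk.1, ?_⟩
        by_contra hns
        have : x k = x₀ := by simp [hxdef, hns]
        rw [this] at hk
        simp only [sub_self, hzero] at hk
        linarith [hk.2]
      have hcard : ((Finset.range n).filter (fun k => Nat.sqrt k * Nat.sqrt k = k)).card
          ≤ Nat.sqrt n + 1 := by
        have : ((Finset.range n).filter (fun k => Nat.sqrt k * Nat.sqrt k = k)).card
            ≤ (Finset.range (Nat.sqrt n + 1)).card := by
          apply Finset.card_le_card_of_injOn Nat.sqrt
          · intro k hk
            simp only [Finset.mem_coe, Finset.mem_filter, Finset.mem_range] at hk ⊢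
            have := Nat.sqrt_le_sqrt (le_of_lt hk.1)
            omega
          · intro a ha b hb hab
            simp only [Finset.mem_coe, Finset.mem_filter] at ha hb
            rw [← ha.2, ← hb.2, hab]
        simpa using this
      calc (((Finset.range n).filter (fun k => ε ≤ T.toFun (x k - x₀) z)).card : ℝ)
          ≤ (((Finset.range n).filter (fun k => Nat.sqrt k * Nat.sqrt k = k)).card : ℝ) := by
            exact_mod_cast Finset.card_le_card hsub
        _ ≤ (Nat.sqrt n + 1 : ℝ) := by exact_mod_cast hcard
    · positivity
  have hconv := h x hstat
  have hNzero : ∀ z : X, T.toFun (f t - f x₀) z = 0 := by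
    intro z
    have hsq : Tendsto (fun m : ℕ => m * m) atTop atTop := by
      apply tendsto_atTop_mono (fun m => ?_) tendsto_id
      rcases Nat.eq_zero_or_pos m with hm | hm
      · simp [hm]
      · simpa using Nat.mul_le_mul_left m hm
    have := (hconv z).comp hsq
    have hx_sq : ∀ m : ℕ, x (m * m) = t := by
      intro m
      simp [hxdef, Nat.sqrt_eq m]
    have hconst : Tendsto (fun _ : ℕ => T.toFun (f t - f x₀) z) atTop (nhds 0) := by
      convert this using 2 with m
      simp [Function.comp, hx_sq m]
    exact tendsto_nhds_unique tendsto_const_nhds hconst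
  -- conclude f t = f x₀
  by_contra hne
  have hv : f t - f x₀ ≠ 0 := sub_ne_zero.mpr hne
  -- span of v is not everything
  have hspan : Submodule.span ℝ {f t - f x₀} ≠ ⊤ := by
    intro htop
    have h1 : Module.rank ℝ X ≤ 1 := by
      have h0 := rank_span_le (R := ℝ) ({f t - f x₀} : Set X)
      rw [htop] at h0
      calc Module.rank ℝ X = Module.rank ℝ (⊤ : Submodule ℝ X) := (rank_top ℝ X).symm
        _ ≤ Cardinal.mk ({f t - f x₀} : Set X) := h0
        _ = 1 := Cardinal.mk_singleton _
    exact absurd T.one_lt_rank (not_lt.mpr h1)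
  obtain ⟨z, hz⟩ : ∃ z : X, z ∉ Submodule.span ℝ {f t - f x₀} := by
    by_contra hall
    push_neg at hall
    exact hspan (Submodule.eq_top_iff'.mpr hall)
  have hind : LinearIndependent ℝ ![z, f t - f x₀] := by
    rw [linearIndependent_fin2]
    constructor
    · simpa using hv
    · intro a ha
      simp only [Matrix.cons_val_one, Matrix.head_cons, Matrix.cons_val_zero] at ha
      exact absurd (ha ▸ Submodule.smul_mem _ a (Submodule.mem_span_singleton_self _)) hz
  have hind' : LinearIndependent ℝ ![f t - f x₀, z] := by
    have : ![f t - f x₀, z] = ![z, f t - f x₀] ∘ (Equiv.swap (0:Fin 2) 1) := by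
      funext i
      fin_cases i <;> simp
    rw [this]
    exact hind.comp _ (Equiv.swap (0:Fin 2) 1).injective
  have := (T.eq_zero_iff (f t - f x₀) z).mp (hNzero z)
  exact this hind'
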